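/- Let f be L-smooth convex with minimizer x_⋆, let x₀ ∈ ℝ^d, g₀ = ∇f(x₀), and z₁ = x₀ − (2/L)g₀. Then f(x₀)⁺ − f(x_⋆) + (L/4)‖z₁ − x_⋆‖² ≤ (L/4)‖x₀ − x_⋆‖², where f(x₀)⁺ = f(x₀) − (1/(2L))‖g₀‖². -/

import Mathlib

open Set InnerProductSpace

variable {F : Type*} [NormedAddCommGroup F] [InnerProductSpace ℝ F] [CompleteSpace F]

lemma line_hasDerivAt (f : F → ℝ) (f' : F → F)
    (hdiff : ∀ x, HasGradientAt f (f' x) x) (x v : F) (t : ℝ) :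
    HasDerivAt (fun s : ℝ => f (x + s • v)) ⟪f' (x + t • v), v⟫_ℝ t := by
  have h1 : HasDerivAt (fun s : ℝ => x + s • v) v t := by
    simpa using ((hasDerivAt_id t).smul_const v).const_add x
  have h2 : HasFDerivAt f (toDual ℝ F (f' (x + t • v))) (x + t • v) :=
    (hasGradientAt_iff_hasFDerivAt).mp (hdiff (x + t • v))
  simpa [toDual_apply_apply, Function.comp_def] using h2.comp_hasDerivAt t h1

lemma descent_lemma (L : ℝ) (hL : 0 < L) (f : F → ℝ) (f' : F → F)
    (hdiff : ∀ x, HasGradientAt f (f' x) x)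
    (hsmooth : ∀ x y, ‖f' x - f' y‖ ≤ L * ‖x - y‖) (x y : F) :
    f y ≤ f x + ⟪f' x, y - x⟫_ℝ + L / 2 * ‖y - x‖ ^ 2 := by
  set v := y - x with hv
  set ψ : ℝ → ℝ := fun t => f (x + t • v) - t * ⟪f' x, v⟫_ℝ - L / 2 * t ^ 2 * ‖v‖ ^ 2 with hψ
  have hψd : ∀ t : ℝ, HasDerivAt ψ
      (⟪f' (x + t • v), v⟫_ℝ - ⟪f' x, v⟫_ℝ - L * t * ‖v‖ ^ 2) t := by
    intro t
    have h1 := line_hasDerivAt f f' hdiff x v t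
    have h2 : HasDerivAt (fun t : ℝ => t * ⟪f' x, v⟫_ℝ) ⟪f' x, v⟫_ℝ t := by
      simpa using (hasDerivAt_id t).mul_const ⟪f' x, v⟫_ℝ
    have h3 : HasDerivAt (fun t : ℝ => L / 2 * t ^ 2 * ‖v‖ ^ 2) (L * t * ‖v‖ ^ 2) t := by
      have := ((hasDerivAt_pow 2 t).const_mul (L / 2)).mul_const (‖v‖ ^ 2)
      exact this.congr_deriv (by push_cast; ring)
    exact (h1.sub h2).sub h3
  have hanti : AntitoneOn ψ (Icc (0:ℝ) 1) := by
    apply antitoneOn_of_deriv_nonpos (convex_Icc 0 1)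
    · exact fun t _ => ((hψd t).continuousAt).continuousWithinAt
    · intro t ht
      exact ((hψd t).differentiableAt).differentiableWithinAt
    · intro t ht
      rw [interior_Icc] at ht
      rw [(hψd t).deriv]
      have hb : ⟪f' (x + t • v) - f' x, v⟫_ℝ ≤ L * t * ‖v‖ ^ 2 := by
        calc ⟪f' (x + t • v) - f' x, v⟫_ℝ ≤ ‖f' (x + t • v) - f' x‖ * ‖v‖ :=
              real_inner_le_norm _ _
          _ ≤ (L * ‖(x + t • v) - x‖) * ‖v‖ := by
              have := hsmooth (x + t • v) x
              nlinarith [norm_nonneg v]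
          _ ≤ L * t * ‖v‖ ^ 2 := by
              have : ‖(x + t • v) - x‖ = t * ‖v‖ := by
                rw [add_sub_cancel_left, norm_smul, Real.norm_eq_abs,
                  abs_of_pos ht.1]
              rw [this]; ring_nf; nlinarith [norm_nonneg v]
      rw [inner_sub_left] at hb
      linarith
  have h01 := hanti (by constructor <;> norm_num) (by constructor <;> norm_num)
    (zero_le_one)
  have e1 : ψ 1 = f y - ⟪f' x, v⟫_ℝ - L / 2 * ‖v‖ ^ 2 := by
    simp [hψ, hv]
  have e0 : ψ 0 = f x := by simp [hψ]
  rw [e1, e0] at h01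
  linarith

lemma first_order (f : F → ℝ) (f' : F → F) (hconv : ConvexOn ℝ Set.univ f)
    (hdiff : ∀ x, HasGradientAt f (f' x) x) (x y : F) :
    f x + ⟪f' x, y - x⟫_ℝ ≤ f y := by
  set v := y - x with hv
  have hd : HasDerivAt (fun s : ℝ => f (x + s • v)) ⟪f' x, v⟫_ℝ 0 := by
    simpa using line_hasDerivAt f f' hdiff x v 0
  have ht : Filter.Tendsto (slope (fun s : ℝ => f (x + s • v)) 0) (nhdsWithin 0 (Ioi 0))
      (nhds ⟪f' x, v⟫_ℝ) :=
    (hasDerivAt_iff_tendsto_slope.mp hd).mono_left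
      (nhdsWithin_mono 0 (fun t ht => ne_of_gt ht))
  have hb : ∀ᶠ t in nhdsWithin (0:ℝ) (Ioi 0), slope (fun s : ℝ => f (x + s • v)) 0 t ≤ f y - f x := by
    filter_upwards [Ioc_mem_nhdsGT_of_mem (by constructor <;> norm_num : (0:ℝ) ∈ Ico 0 1)]
    intro t htm
    have hcv := hconv.2 (mem_univ x) (mem_univ y) (by linarith [htm.2] : (0:ℝ) ≤ 1 - t)
      (le_of_lt htm.1) (by ring)
    have hxe : (1 - t) • x + t • y = x + t • v := by
      rw [hv]; module
    rw [hxe] at hcv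
    rw [slope_def_field]
    simp only [zero_smul, add_zero, sub_zero]
    rw [div_le_iff₀ htm.1]
    simp only [smul_eq_mul] at hcv
    nlinarith [htm.1]
  have := le_of_tendsto ht hb
  linarith
theorem spgm_initialization {d : ℕ} (L : ℝ) (hL : 0 < L)
    (f : EuclideanSpace ℝ (Fin d) → ℝ)
    (f' : EuclideanSpace ℝ (Fin d) → EuclideanSpace ℝ (Fin d))
    (hconv : ConvexOn ℝ Set.univ f)
    (hdiff : ∀ x, HasGradientAt f (f' x) x)
    (hsmooth : ∀ x y, ‖f' x - f' y‖ ≤ L * ‖x - y‖)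
    (xstar : EuclideanSpace ℝ (Fin d)) (hmin : ∀ y, f xstar ≤ f y)
    (x₀ : EuclideanSpace ℝ (Fin d))
    (z₁ : EuclideanSpace ℝ (Fin d)) (hz₁ : z₁ = x₀ - (2 / L) • f' x₀) :
    (f x₀ - (1 / (2 * L)) * ‖f' x₀‖ ^ 2) - f xstar
        + L / 4 * ‖z₁ - xstar‖ ^ 2 ≤ L / 4 * ‖x₀ - xstar‖ ^ 2 := by
  set g := f' x₀ with hg
  -- gradient vanishes at the minimizer
  have hstar : f' xstar = 0 := by
    have hloc : IsLocalMin f xstar := Filter.Eventually.of_forall hmin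
    have hfd : HasFDerivAt f (toDual ℝ (EuclideanSpace ℝ (Fin d)) (f' xstar)) xstar :=
      (hasGradientAt_iff_hasFDerivAt).mp (hdiff xstar)
    have h0 := hloc.hasFDerivAt_eq_zero hfd
    have := (toDual ℝ (EuclideanSpace ℝ (Fin d))).injective (by simpa using h0)
    simpa using this
  -- the tilted function h
  set h : EuclideanSpace ℝ (Fin d) → ℝ := fun z => f z - ⟪g, z⟫_ℝ with hh
  set h' : EuclideanSpace ℝ (Fin d) → EuclideanSpace ℝ (Fin d) := fun z => f' z - g with hh'
  have hdiff_h : ∀ z, HasGradientAt h (h' z) z := by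
    intro z
    rw [hasGradientAt_iff_hasFDerivAt]
    have h1 : HasFDerivAt f (toDual ℝ (EuclideanSpace ℝ (Fin d)) (f' z)) z :=
      (hasGradientAt_iff_hasFDerivAt).mp (hdiff z)
    have h2 : HasFDerivAt (fun z : EuclideanSpace ℝ (Fin d) => ⟪g, z⟫_ℝ) (toDual ℝ (EuclideanSpace ℝ (Fin d)) g) z := by
      have := (toDual ℝ (EuclideanSpace ℝ (Fin d)) g).hasFDerivAt (x := z)
      have he : (fun z : EuclideanSpace ℝ (Fin d) => ⟪g, z⟫_ℝ)
          = ⇑(toDual ℝ (EuclideanSpace ℝ (Fin d)) g) := by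
        funext w; rw [toDual_apply_apply]
      rw [he]; exact this
    have := h1.sub h2
    simpa [hh, hh', map_sub, Pi.sub_def] using this
  have hconv_h : ConvexOn ℝ Set.univ h := by
    refine ⟨convex_univ, fun a _ b _ s t hs ht hst => ?_⟩
    have := hconv.2 (Set.mem_univ a) (Set.mem_univ b) hs ht hst
    simp only [hh, inner_add_right, inner_smul_right, smul_eq_mul]
    simp only [smul_eq_mul] at this
    linarith
  have hsmooth_h : ∀ x y : EuclideanSpace ℝ (Fin d), ‖h' x - h' y‖ ≤ L * ‖x - y‖ := by
    intro x y
    simpa [hh', sub_sub_sub_cancel_right] using hsmooth x y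
  -- x₀ minimizes h (first-order condition, gradient of h at x₀ is 0)
  have hmin_h : ∀ z, h x₀ ≤ h z := by
    intro z
    have := first_order h h' hconv_h hdiff_h x₀ z
    simpa [hh', hg] using this
  -- descent step for h at xstar
  have hdesc := descent_lemma L hL h h' hdiff_h hsmooth_h xstar (xstar + (1/L) • g)
  have hstep : h (xstar + (1/L) • g) ≤ h xstar - 1/(2*L) * ‖g‖^2 := by
    have e1 : (xstar + (1/L) • g) - xstar = (1/L) • g := by abel
    rw [e1] at hdesc
    have e2 : ⟪h' xstar, (1/L) • g⟫_ℝ = -(1/L) * ‖g‖^2 := by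
      have hng : h' xstar = -g := by simp [hh', hstar]
      rw [hng, real_inner_smul_right, inner_neg_left, real_inner_self_eq_norm_sq]
      push_cast
      ring
    have e3 : ‖(1/L) • g‖^2 = (1/L)^2 * ‖g‖^2 := by
      rw [norm_smul, Real.norm_eq_abs, abs_of_pos (by positivity : (0:ℝ) < 1/L)]
      ring
    rw [e2, e3] at hdesc
    have : L/2 * ((1/L)^2 * ‖g‖^2) = 1/(2*L) * ‖g‖^2 := by
      field_simp
    have h2 : (1:ℝ)/L * ‖g‖^2 = 2 * (1/(2*L) * ‖g‖^2) := by field_simp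
    linarith [hdesc, this.le, this.ge]
  -- key interpolation inequality
  have key : f x₀ + ⟪g, xstar - x₀⟫_ℝ + 1/(2*L) * ‖g‖^2 ≤ f xstar := by
    have := (hmin_h (xstar + (1/L) • g)).trans hstep
    simp only [hh] at this
    rw [inner_sub_right]
    linarith
  -- expand the norm
  set u : ℝ := 1/L with hu'
  have hu : L * u = 1 := by rw [hu']; field_simp
  have hz : z₁ - xstar = (x₀ - xstar) - (2*u) • g := by
    rw [hz₁, hu']; module
  have expand : ‖z₁ - xstar‖^2
      = ‖x₀ - xstar‖^2 - (4*u) * ⟪g, x₀ - xstar⟫_ℝ + (4*u^2) * ‖g‖^2 := by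
    rw [hz, @norm_sub_sq_real]
    have hupos : (0:ℝ) < u := by rw [hu']; positivity
    rw [real_inner_smul_right, norm_smul, real_inner_comm, Real.norm_eq_abs,
      abs_of_pos (by linarith : (0:ℝ) < 2*u)]
    ring
  rw [expand]
  have hI : ⟪g, xstar - x₀⟫_ℝ = -⟪g, x₀ - xstar⟫_ℝ := by
    rw [← inner_neg_right]; congr 1; abel
  rw [hI] at key
  have h2L : (1:ℝ)/(2*L) = u/2 := by rw [hu']; field_simp
  rw [h2L] at key ⊢
  set A := ‖x₀ - xstar‖^2
  set I := ⟪g, x₀ - xstar⟫_ℝ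
  set G := ‖g‖^2
  have e : L/4 * (A - 4*u*I + 4*u^2*G) = L/4*A - I + u*G := by
    linear_combination (u*G - I) * hu
  nlinarith [key, e]
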